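/- arXiv:1503.01882 — 5 statements merged into one kernel-verified Lean document; each statement's English description precedes it below -/
import Mathlib

section
/- For every real number x ≥ 0 that is not an integer, one has ∏_{i=0}^{⌈x⌉} (x−i)(x−i+2)(x−i+4)(x−i+6) < 0. (Equivalently: if x ≥ 0 and this product is nonnegative, then x is a nonnegative integer.) -/
/-- For every real `x ≥ 0` that is not an integer,
`∏_{i=0}^{⌈x⌉} (x−i)(x−i+2)(x−i+4)(x−i+6) < 0`. -/
theorem hanlon_wales_rect_sign (x : ℝ) (hx : 0 ≤ x) (hni : ¬ ∃ n : ℤ, x = (n : ℝ)) :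
    ∏ i ∈ Finset.range (⌈x⌉₊ + 1),
      ((x - i) * (x - i + 2) * (x - i + 4) * (x - i + 6)) < 0 := by
  have hx0 : 0 < x := lt_of_le_of_ne hx (fun h => hni ⟨0, by simp [← h]⟩)
  have hn : 0 < ⌈x⌉₊ := Nat.ceil_pos.mpr hx0
  have hlt : x < (⌈x⌉₊ : ℝ) :=
    lt_of_le_of_ne (Nat.le_ceil x) (fun h => hni ⟨(⌈x⌉₊ : ℤ), by exact_mod_cast h⟩)
  have hgt : (⌈x⌉₊ : ℝ) - 1 < x := by
    have h1 : ((⌈x⌉₊ - 1 : ℕ) : ℝ) < x := Nat.lt_ceil.mp (Nat.sub_lt hn one_pos)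
    push_cast [hn] at h1
    linarith
  rw [Finset.prod_range_succ]
  have hpos : 0 < ∏ i ∈ Finset.range ⌈x⌉₊,
      ((x - i) * (x - i + 2) * (x - i + 4) * (x - i + 6)) := by
    apply Finset.prod_pos
    intro i hi
    have h1 : (i : ℝ) < x := Nat.lt_ceil.mp (Finset.mem_range.mp hi)
    have a : 0 < x - i := by linarith
    exact mul_pos (mul_pos (mul_pos a (by linarith)) (by linarith)) (by linarith)
  have hneg : (x - ⌈x⌉₊) * (x - ⌈x⌉₊ + 2) * (x - ⌈x⌉₊ + 4) * (x - ⌈x⌉₊ + 6) < 0 := by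
    have a : x - (⌈x⌉₊ : ℝ) < 0 := by linarith
    exact mul_neg_of_neg_of_pos
      (mul_neg_of_neg_of_pos (mul_neg_of_neg_of_pos a (by linarith)) (by linarith))
      (by linarith)
  exact mul_neg_of_pos_of_neg hpos hneg
end

section
/- Let I be a finite set, G a finite group acting on I, and for g ∈ G let P_g be the I × I real permutation matrix of the action (so (P_g w)_i = w_{g⁻¹·i}). Let A be a real I × I matrix commuting with P_g for every g ∈ G, and set B := Σ_{g ∈ G} A·P_g. Suppose B is positive semidefinite, and suppose v ∈ ℝ^I and μ ∈ ℝ satisfy A v = μ v and Σ_{g ∈ G} P_g v ≠ 0. Then μ ≥ 0. -/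
open Matrix

/-- The permutation matrix of the action of `g`: `(permMat g) i j = 1` iff `i = g • j`,
so that `(permMat g).mulVec w i = w (g⁻¹ • i)`. -/
def permMat {I : Type*} [DecidableEq I] {G : Type*} [Group G] [MulAction G I]
    (g : G) : Matrix I I ℝ :=
  Matrix.of fun i j => if i = g • j then 1 else 0

lemma permMat_mulVec {I : Type*} [Fintype I] [DecidableEq I]
    {G : Type*} [Group G] [MulAction G I] (g : G) (v : I → ℝ) :
    (permMat g).mulVec v = fun i => v (g⁻¹ • i) := by
  funext i
  simp only [permMat, Matrix.mulVec, dotProduct, Matrix.of_apply]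
  rw [Finset.sum_eq_single (g⁻¹ • i)]
  · simp
  · intro j _ hj
    rw [if_neg, zero_mul]
    intro h
    exact hj (by rw [h, inv_smul_smul])
  · simp

lemma my_sum_dotProduct {I : Type*} [Fintype I] {G : Type*} [Fintype G]
    (f : G → I → ℝ) (w : I → ℝ) :
    (∑ g : G, f g) ⬝ᵥ w = ∑ g : G, f g ⬝ᵥ w := by
  simp only [dotProduct, Finset.sum_apply, Finset.sum_mul]
  exact Finset.sum_comm

lemma my_dotProduct_sum {I : Type*} [Fintype I] {G : Type*} [Fintype G]
    (w : I → ℝ) (f : G → I → ℝ) :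
    w ⬝ᵥ (∑ g : G, f g) = ∑ g : G, w ⬝ᵥ f g := by
  simp only [dotProduct, Finset.sum_apply, Finset.mul_sum]
  exact Finset.sum_comm

lemma my_sum_mulVec {I : Type*} [Fintype I] {G : Type*} [Fintype G]
    (f : G → Matrix I I ℝ) (w : I → ℝ) :
    (∑ g : G, f g).mulVec w = ∑ g : G, (f g).mulVec w := by
  funext i
  simp only [Matrix.mulVec, dotProduct, Matrix.sum_apply, Finset.sum_apply,
    Finset.sum_mul]
  exact Finset.sum_comm

/-- Let `A` be a real `I × I` matrix commuting with the permutation matrices `P_g` of a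
finite group `G` acting on the finite set `I`, and let `B := Σ_{g∈G} A·P_g` be positive
semidefinite.  If `A v = μ v` and `Σ_{g∈G} P_g v ≠ 0`, then `μ ≥ 0`. -/
theorem averaged_eigenvalue_nonneg {I : Type*} [Fintype I] [DecidableEq I]
    {G : Type*} [Group G] [Fintype G] [MulAction G I]
    (A : Matrix I I ℝ)
    (hA : ∀ g : G, A * permMat g = permMat g * A)
    (hB : (∑ g : G, A * permMat g).PosSemidef)
    (v : I → ℝ) (μ : ℝ)
    (hv : A.mulVec v = μ • v)
    (hu : ∑ g : G, (permMat g).mulVec v ≠ 0) :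
    0 ≤ μ := by
  classical
  set u : I → ℝ := ∑ g : G, (permMat g).mulVec v with hu_def
  have key : ∀ g h : G, ((permMat g).mulVec v) ⬝ᵥ ((permMat h).mulVec v)
      = v ⬝ᵥ ((permMat (g⁻¹ * h)).mulVec v) := by
    intro g h
    simp only [permMat_mulVec, dotProduct]
    refine (Fintype.sum_equiv (MulAction.toPerm g)
      (fun j => v j * v ((g⁻¹ * h)⁻¹ • j))
      (fun i => v (g⁻¹ • i) * v (h⁻¹ • i)) ?_).symm
    intro j
    simp [MulAction.toPerm, _root_.mul_inv_rev, mul_smul]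
  have huu : u ⬝ᵥ u = (Fintype.card G : ℝ) * (v ⬝ᵥ u) := by
    rw [hu_def, my_sum_dotProduct]
    have : ∀ g : G, ((permMat g).mulVec v) ⬝ᵥ (∑ h : G, (permMat h).mulVec v)
        = v ⬝ᵥ (∑ h : G, (permMat h).mulVec v) := by
      intro g
      rw [my_dotProduct_sum, my_dotProduct_sum]
      refine Fintype.sum_equiv (Equiv.mulLeft g⁻¹) _ _ ?_
      intro h
      rw [key g h]
      rfl
    simp only [this, Finset.sum_const, Finset.card_univ, nsmul_eq_mul]
  have hpos : 0 < v ⬝ᵥ u := by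
    have h1 : 0 < u ⬝ᵥ u := by
      rcases (Finset.sum_nonneg fun i _ => mul_self_nonneg (u i)).lt_or_eq with h | h
      · exact h
      · exact absurd (dotProduct_self_eq_zero.mp h.symm) hu
    rw [huu] at h1
    by_contra hcon
    push_neg at hcon
    have : (Fintype.card G : ℝ) * (v ⬝ᵥ u) ≤ 0 :=
      mul_nonpos_of_nonneg_of_nonpos (Nat.cast_nonneg _) hcon
    linarith
  have hBv : (∑ g : G, A * permMat g).mulVec v = μ • u := by
    rw [my_sum_mulVec, hu_def, Finset.smul_sum]
    refine Finset.sum_congr rfl fun g _ => ?_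
    rw [hA g, ← Matrix.mulVec_mulVec, hv, Matrix.mulVec_smul]
  have h2 := hB.dotProduct_mulVec_nonneg v
  rw [hBv] at h2
  simp only [dotProduct_smul, RCLike.star_def, star_trivial, smul_eq_mul] at h2
  exact (mul_nonneg_iff_of_pos_right hpos).mp h2
end

section
/- Let k ≥ 1 be an integer. In S_{8k}, let F be the involution with F(i) = 4k+i and F(4k+i) = i for i ∈ {1,…,4k}; let B be the subgroup generated by b_j := (4j−3, 4j−1)(4j−2, 4j) for j ∈ {1,…,2k}; let D be the set of d ∈ S_{8k} for which there exists π ∈ S_{2k} with d(4j−i) = 4π(j)−i for all j ∈ {1,…,2k}, i ∈ {0,1,2,3}; and let Q := {b·d : b ∈ B, d ∈ D}. For j ∈ {1,…,k} let Row_j := {4j−3, 4j−2, 4j−1, 4j} ∪ {4k+4j−3, 4k+4j−2, 4k+4j−1, 4k+4j}, and let R be the group of all r ∈ S_{8k} with r(Row_j) = Row_j for every j. Let the eight columns be K₁ := {4j−3 : j ∈ [k]}, K₂ := {4k+4j−3 : j ∈ [k]}, K₃ := {4j−2 : j ∈ [k]}, K₄ := {4k+4j−2 : j ∈ [k]}, K₅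 := {4j−1 : j ∈ [k]}, K₆ := {4k+4j−1 : j ∈ [k]}, K₇ := {4j : j ∈ [k]}, K₈ := {4k+4j : j ∈ [k]}, and let C be the group of all c ∈ S_{8k} with c(K_i) = K_i for every i ∈ {1,…,8}. Then for all q ∈ Q, c ∈ C, r ∈ R: if q F q⁻¹ = (c r) F (c r)⁻¹, then sgn(c) = 1. -/
/-- The ground set `{1, …, 8k}` of the symmetric group `S_{8k}`. -/
abbrev Pt (k : ℕ) := {i : ℕ // i ∈ Finset.Icc 1 (8 * k)}

/-- The block indices `{1, …, 2k}`. -/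
abbrev Blk (k : ℕ) := {j : ℕ // j ∈ Finset.Icc 1 (2 * k)}

/-- The permutation `b_j = (4j−3, 4j−1)(4j−2, 4j)` of `{1,…,8k}`, described pointwise. -/
def IsBGen (k : ℕ) (b : Equiv.Perm (Pt k)) : Prop :=
  ∃ j : Blk k, ∀ m : Pt k, (b m).val =
    if m.val = 4 * j.val - 3 then 4 * j.val - 1
    else if m.val = 4 * j.val - 1 then 4 * j.val - 3
    else if m.val = 4 * j.val - 2 then 4 * j.val
    else if m.val = 4 * j.val then 4 * j.val - 2
    else m.val

/-- The subgroup `B` generated by the permutations `b_j`, `j ∈ {1,…,2k}`. -/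
def Bsub (k : ℕ) : Subgroup (Equiv.Perm (Pt k)) :=
  Subgroup.closure {b | IsBGen k b}

/-- The set `D` of permutations `d` of `{1,…,8k}` for which there is `π ∈ S_{2k}` with
`d(4j−i) = 4π(j)−i` for all `j ∈ {1,…,2k}` and `i ∈ {0,1,2,3}`. -/
def Dset (k : ℕ) : Set (Equiv.Perm (Pt k)) :=
  {d | ∃ π : Equiv.Perm (Blk k), ∀ (j : Blk k) (i : ℕ), i ≤ 3 →
    ∀ m : Pt k, m.val = 4 * j.val - i → (d m).val = 4 * (π j).val - i}

/-- The set `Q = B·D`. -/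
def Qset (k : ℕ) : Set (Equiv.Perm (Pt k)) :=
  {q | ∃ b ∈ Bsub k, ∃ d ∈ Dset k, q = b * d}

/-- The `j`-th row `Row_j = {4j−3,…,4j} ∪ {4k+4j−3,…,4k+4j}` of the Young tableau
for the partition `(8,8,…,8)`. -/
def RowSet (k j : ℕ) : Set (Pt k) :=
  {m | m.val ∈ ({4 * j - 3, 4 * j - 2, 4 * j - 1, 4 * j,
      4 * k + 4 * j - 3, 4 * k + 4 * j - 2, 4 * k + 4 * j - 1, 4 * k + 4 * j} : Set ℕ)}

/-- `r` belongs to the row group `R`: it maps every row `Row_j`, `j ∈ {1,…,k}`, onto itself. -/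
def InRowGroup (k : ℕ) (r : Equiv.Perm (Pt k)) : Prop :=
  ∀ j : ℕ, 1 ≤ j → j ≤ k → (⇑r '' RowSet k j) = RowSet k j

/-- The entry of the `i`-th column (`i ∈ {1,…,8}`, here `i : Fin 8`) in the `j`-th row. -/
def colVal (k : ℕ) (i : Fin 8) (j : ℕ) : ℕ :=
  match i with
  | 0 => 4 * j - 3
  | 1 => 4 * k + 4 * j - 3
  | 2 => 4 * j - 2
  | 3 => 4 * k + 4 * j - 2
  | 4 => 4 * j - 1
  | 5 => 4 * k + 4 * j - 1
  | 6 => 4 * j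
  | 7 => 4 * k + 4 * j

/-- The `i`-th column `K_i = {colVal k i j : j ∈ {1,…,k}}` of the Young tableau. -/
def ColSet (k : ℕ) (i : Fin 8) : Set (Pt k) :=
  {m | ∃ j : ℕ, 1 ≤ j ∧ j ≤ k ∧ m.val = colVal k i j}

/-- `c` belongs to the column group `C`: it maps every column `K_i` onto itself. -/
def InColGroup (k : ℕ) (c : Equiv.Perm (Pt k)) : Prop :=
  ∀ i : Fin 8, (⇑c '' ColSet k i) = ColSet k i


open Equiv Equiv.Perm

theorem Equiv.Perm.inv_apply_self {α : Type*} (f : Equiv.Perm α) (x : α) : f⁻¹ (f x) = x :=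
  f.symm_apply_apply x

theorem Equiv.Perm.apply_inv_self {α : Type*} (f : Equiv.Perm α) (x : α) : f (f⁻¹ x) = x :=
  f.apply_symm_apply x

set_option linter.unusedSectionVars false
set_option linter.unusedVariables false

namespace SignCond

variable {S : Type*} [Fintype S] [DecidableEq S]

/-- Pointwise pairing condition for three permutations (fourth being `1`). -/
def Cond (x y z : Perm S) : Prop :=
  ∀ s : S, (x s = s ∧ y s = z s) ∨ (y s = s ∧ x s = z s) ∨ (z s = s ∧ x s = y s)

def badSet (x y z : Perm S) : Finset S :=
  Finset.univ.filter (fun s => ¬ (x s = s ∧ y s = s ∧ z s = s))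

lemma badSet_comm12 (x y z : Perm S) : badSet y x z = badSet x y z := by
  unfold badSet; apply Finset.filter_congr; intro s _; constructor <;> (intro h; tauto)

lemma badSet_comm3 (x y z : Perm S) : badSet z x y = badSet x y z := by
  unfold badSet; apply Finset.filter_congr; intro s _; constructor <;> (intro h; tauto)

lemma cond_comm12 {x y z : Perm S} (h : Cond x y z) : Cond y x z := by
  intro s; rcases h s with ⟨h1,h2⟩|⟨h1,h2⟩|⟨h1,h2⟩
  · exact Or.inr (Or.inl ⟨h1, h2⟩)
  · exact Or.inl ⟨h1, h2⟩
  · exact Or.inr (Or.inr ⟨h1, h2.symm⟩)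

lemma cond_comm3 {x y z : Perm S} (h : Cond x y z) : Cond z x y := by
  intro s; rcases h s with ⟨h1,h2⟩|⟨h1,h2⟩|⟨h1,h2⟩
  · exact Or.inr (Or.inl ⟨h1, h2.symm⟩)
  · exact Or.inr (Or.inr ⟨h1, h2.symm⟩)
  · exact Or.inl ⟨h1, h2⟩

lemma units_shuffle (a b c : ℤˣ) : a * (-1 * b) * (-1 * c) = a * b * c := by
  apply Units.ext
  simp only [Units.val_mul, Units.val_neg, Units.val_one]
  ring

/-- The surgery step preserves the condition. -/
lemma step_cond {x y z : Perm S} {s₀ u : S} (h1 : x s₀ = s₀) (h2 : y s₀ = u)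
    (h3 : z s₀ = u) (hus : u ≠ s₀) (hC : Cond x y z) :
    Cond x (Equiv.swap s₀ u * y) (Equiv.swap s₀ u * z) := by
  intro s
  by_cases hs0 : s = s₀
  · subst hs0
    exact Or.inl ⟨h1, by simp [h2, h3]⟩
  by_cases hsu : s = u
  · subst hsu
    rcases hC s with ⟨ha, hb⟩|⟨ha, hb⟩|⟨ha, hb⟩
    · exact Or.inl ⟨ha, by simp [hb]⟩
    · exact absurd (y.injective (h2.trans ha.symm)) (Ne.symm hs0)
    · exact absurd (z.injective (h3.trans ha.symm)) (Ne.symm hs0)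
  · rcases hC s with ⟨ha, hb⟩|⟨ha, hb⟩|⟨ha, hb⟩
    · exact Or.inl ⟨ha, by simp [hb]⟩
    · refine Or.inr (Or.inl ⟨?_, ?_⟩)
      · simp only [Perm.mul_apply, ha]
        exact Equiv.swap_apply_of_ne_of_ne hs0 hsu
      · have hz1 : z s ≠ s₀ := by
          intro h
          exact hs0 (x.injective (hb.trans (h.trans h1.symm)))
        have hz2 : z s ≠ u := by
          intro h
          exact hs0 (z.injective (h.trans h3.symm))
        simp only [Perm.mul_apply, hb]
        rw [Equiv.swap_apply_of_ne_of_ne hz1 hz2]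
    · refine Or.inr (Or.inr ⟨?_, ?_⟩)
      · simp only [Perm.mul_apply, ha]
        exact Equiv.swap_apply_of_ne_of_ne hs0 hsu
      · have hy1 : y s ≠ s₀ := by
          intro h
          exact hs0 (x.injective (hb.trans (h.trans h1.symm)))
        have hy2 : y s ≠ u := by
          intro h
          exact hs0 (y.injective (h.trans h2.symm))
        simp only [Perm.mul_apply, hb]
        rw [Equiv.swap_apply_of_ne_of_ne hy1 hy2]

lemma step_bad {x y z : Perm S} {s₀ u : S} (h1 : x s₀ = s₀) (h2 : y s₀ = u)
    (h3 : z s₀ = u) (hus : u ≠ s₀) :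
    badSet x (Equiv.swap s₀ u * y) (Equiv.swap s₀ u * z) ⊆ (badSet x y z).erase s₀ := by
  intro s hs
  simp only [badSet, Finset.mem_filter, Finset.mem_univ, true_and] at hs
  simp only [Perm.mul_apply] at hs
  rw [Finset.mem_erase]
  constructor
  · intro h
    subst h
    exact hs ⟨h1, by simp [h2, h3], by simp [h2, h3]⟩
  · simp only [badSet, Finset.mem_filter, Finset.mem_univ, true_and]
    intro ⟨ha, hb, hc⟩
    apply hs
    have hne0 : s ≠ s₀ := by
      intro h; subst h; exact hus (h2.symm.trans hb)
    have hneu : s ≠ u := by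
      intro h; subst h; exact hne0 (y.injective (hb.trans h2.symm))
    exact ⟨ha, by rw [hb]; exact Equiv.swap_apply_of_ne_of_ne hne0 hneu,
      by rw [hc]; exact Equiv.swap_apply_of_ne_of_ne hne0 hneu⟩

lemma sign_triple_aux : ∀ (n : ℕ) (x y z : Perm S), (badSet x y z).card ≤ n →
    Cond x y z → sign x * sign y * sign z = 1 := by
  intro n
  induction n with
  | zero =>
    intro x y z hcard _
    have hempty : badSet x y z = ∅ := Finset.card_eq_zero.mp (Nat.le_zero.mp hcard)
    have hall : ∀ s : S, x s = s ∧ y s = s ∧ z s = s := by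
      intro s
      by_contra h
      have : s ∈ badSet x y z := by
        simp only [badSet, Finset.mem_filter, Finset.mem_univ, true_and]; exact h
      simp [hempty] at this
    have hx : x = 1 := Equiv.ext fun s => (hall s).1
    have hy : y = 1 := Equiv.ext fun s => (hall s).2.1
    have hz : z = 1 := Equiv.ext fun s => (hall s).2.2
    simp [hx, hy, hz]
  | succ n ih =>
    intro x y z hcard hC
    by_cases hempty : badSet x y z = ∅
    · have hall : ∀ s : S, x s = s ∧ y s = s ∧ z s = s := by
        intro s
        by_contra h
        have : s ∈ badSet x y z := by
          simp only [badSet, Finset.mem_filter, Finset.mem_univ, true_and]; exact h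
        simp [hempty] at this
      have hx : x = 1 := Equiv.ext fun s => (hall s).1
      have hy : y = 1 := Equiv.ext fun s => (hall s).2.1
      have hz : z = 1 := Equiv.ext fun s => (hall s).2.2
      simp [hx, hy, hz]
    · obtain ⟨s₀, hs₀⟩ := Finset.nonempty_iff_ne_empty.mpr hempty
      have hs₀' : ¬ (x s₀ = s₀ ∧ y s₀ = s₀ ∧ z s₀ = s₀) := by
        simpa [badSet] using hs₀
      have hcard' : ∀ x' y' z' : Perm S,
          badSet x' y' z' ⊆ (badSet x y z).erase s₀ → (badSet x' y' z').card ≤ n := by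
        intro x' y' z' hsub
        calc (badSet x' y' z').card ≤ ((badSet x y z).erase s₀).card :=
              Finset.card_le_card hsub
          _ = (badSet x y z).card - 1 := Finset.card_erase_of_mem hs₀
          _ ≤ n := by omega
      rcases hC s₀ with ⟨ha, hb⟩|⟨ha, hb⟩|⟨ha, hb⟩
      · -- x fixes s₀
        set u := y s₀ with hu
        have hus : u ≠ s₀ := by
          intro h
          exact hs₀' ⟨ha, h, hb ▸ h⟩
        have key := ih x (Equiv.swap s₀ u * y) (Equiv.swap s₀ u * z)
          (hcard' _ _ _ (step_bad ha hu.symm hb.symm hus))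
          (step_cond ha hu.symm hb.symm hus hC)
        have hsw : sign (Equiv.swap s₀ u) = -1 := sign_swap (Ne.symm hus)
        simp only [map_mul, hsw] at key
        calc sign x * sign y * sign z
            = sign x * (-1 * sign y) * (-1 * sign z) := (units_shuffle _ _ _).symm
          _ = 1 := key
      · -- y fixes s₀
        set u := x s₀ with hu
        have hus : u ≠ s₀ := by
          intro h
          exact hs₀' ⟨h, ha, hb ▸ h⟩
        have key := ih y (Equiv.swap s₀ u * x) (Equiv.swap s₀ u * z)
          (hcard' _ _ _ (by
            have := step_bad ha hu.symm hb.symm hus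
            rwa [badSet_comm12 x y z] at this))
          (step_cond ha hu.symm hb.symm hus (cond_comm12 hC))
        have hsw : sign (Equiv.swap s₀ u) = -1 := sign_swap (Ne.symm hus)
        simp only [map_mul, hsw] at key
        calc sign x * sign y * sign z
            = sign y * (-1 * sign x) * (-1 * sign z) := by
              rw [units_shuffle]
              apply Units.ext
              simp only [Units.val_mul]; ring
          _ = 1 := key
      · -- z fixes s₀
        set u := x s₀ with hu
        have hb' : y s₀ = u := hb.symm
        have hus : u ≠ s₀ := by
          intro h
          exact hs₀' ⟨h, hb' ▸ h, ha⟩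
        have key := ih z (Equiv.swap s₀ u * x) (Equiv.swap s₀ u * y)
          (hcard' _ _ _ (by
            have := step_bad ha hu.symm hb' hus
            rwa [badSet_comm3 x y z] at this))
          (step_cond ha hu.symm hb' hus (cond_comm3 hC))
        have hsw : sign (Equiv.swap s₀ u) = -1 := sign_swap (Ne.symm hus)
        simp only [map_mul, hsw] at key
        calc sign x * sign y * sign z
            = sign z * (-1 * sign x) * (-1 * sign y) := by
              rw [units_shuffle]
              apply Units.ext
              simp only [Units.val_mul]; ring
          _ = 1 := key

/-- Main abstract lemma: four permutations whose values pair up pointwise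
have sign product one. -/
lemma sign_quadruple (w x y z : Perm S)
    (h : ∀ s, (w s = x s ∧ y s = z s) ∨ (w s = y s ∧ x s = z s) ∨ (w s = z s ∧ x s = y s)) :
    sign w * sign x * sign y * sign z = 1 := by
  have hC : Cond (w⁻¹ * x) (w⁻¹ * y) (w⁻¹ * z) := by
    intro s
    rcases h s with ⟨h1,h2⟩|⟨h1,h2⟩|⟨h1,h2⟩
    · exact Or.inl ⟨by simp only [Perm.mul_apply, ← h1, Perm.inv_apply_self],
        by simp only [Perm.mul_apply, h2]⟩
    · exact Or.inr (Or.inl ⟨by simp only [Perm.mul_apply, ← h1, Perm.inv_apply_self],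
        by simp only [Perm.mul_apply, h2]⟩)
    · exact Or.inr (Or.inr ⟨by simp only [Perm.mul_apply, ← h1, Perm.inv_apply_self],
        by simp only [Perm.mul_apply, h2]⟩)
  have key := sign_triple_aux (badSet (w⁻¹ * x) (w⁻¹ * y) (w⁻¹ * z)).card _ _ _ le_rfl hC
  simp only [map_mul, map_inv] at key
  have hB : (sign w : ℤˣ) * (sign w) = 1 := Int.units_mul_self _
  have hinv : (sign w)⁻¹ = sign w := inv_eq_of_mul_eq_one_right hB
  rw [hinv] at key
  apply Units.ext
  have key' := congrArg Units.val key
  have hB' := congrArg Units.val hB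
  simp only [Units.val_mul, Units.val_one] at key' hB' ⊢
  linear_combination key' - ((sign w : ℤˣ) : ℤ) * ((sign x : ℤˣ) : ℤ) * ((sign y : ℤˣ) : ℤ) * ((sign z : ℤˣ) : ℤ) * hB'



/-! ### Value-level coordinates.  For `v ∈ [1, 8k]` write `v = 1 + 4k·s + 4j + e`
with `s < 2` (side), `j < k` (row), `e < 4`. `bk = k·s + j` is the block index. -/

def eeV (v : ℕ) : ℕ := (v - 1) % 4
def bkV (v : ℕ) : ℕ := (v - 1) / 4
def sdV (k v : ℕ) : ℕ := if v ≤ 4 * k then 0 else 1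
def rwV (k v : ℕ) : ℕ := if v ≤ 4 * k then bkV v else bkV v - k
def mkv (k s j e : ℕ) : ℕ := 1 + 4 * k * s + 4 * j + e
def twE (e : ℕ) : ℕ := if e < 2 then e + 2 else e - 2
def twV (v : ℕ) : ℕ := if eeV v < 2 then v + 2 else v - 2

lemma sdV_lt (k v : ℕ) : sdV k v < 2 := by unfold sdV; split_ifs <;> omega
lemma eeV_lt (v : ℕ) : eeV v < 4 := by unfold eeV; omega
lemma rwV_lt {k v : ℕ} (h1 : 1 ≤ v) (h2 : v ≤ 8 * k) : rwV k v < k := by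
  unfold rwV bkV; split_ifs <;> omega
lemma bkV_eq (k v : ℕ) : bkV v = k * sdV k v + rwV k v := by
  unfold sdV rwV bkV; split_ifs <;> omega
lemma bkV_lt {k v : ℕ} (h1 : 1 ≤ v) (h2 : v ≤ 8 * k) : bkV v < 2 * k := by
  unfold bkV; omega
lemma val_repr {k v : ℕ} (h1 : 1 ≤ v) (h2 : v ≤ 8 * k) :
    v = mkv k (sdV k v) (rwV k v) (eeV v) := by
  unfold mkv sdV rwV bkV eeV; split_ifs <;> simp <;> omega

lemma mkv_coords {k s j e : ℕ} (hs : s < 2) (hj : j < k) (he : e < 4) :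
    sdV k (mkv k s j e) = s ∧ rwV k (mkv k s j e) = j ∧ eeV (mkv k s j e) = e ∧
      bkV (mkv k s j e) = k * s + j ∧ 1 ≤ mkv k s j e ∧ mkv k s j e ≤ 8 * k := by
  have hs01 : s = 0 ∨ s = 1 := by omega
  rcases hs01 with rfl | rfl <;>
    · unfold mkv sdV rwV bkV eeV
      split_ifs <;> constructor <;> try constructor
      all_goals omega

lemma twE_lt {e : ℕ} (he : e < 4) : twE e < 4 := by unfold twE; split_ifs <;> omega
lemma twE_twE {e : ℕ} (he : e < 4) : twE (twE e) = e := by unfold twE; split_ifs <;> omega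
lemma twV_mkv {k s j e : ℕ} (hs : s < 2) (hj : j < k) (he : e < 4) :
    twV (mkv k s j e) = mkv k s j (twE e) := by
  have h := mkv_coords (k := k) hs hj he
  unfold twV twE
  rw [h.2.2.1]
  have hs01 : s = 0 ∨ s = 1 := by omega
  rcases hs01 with rfl | rfl <;> (unfold mkv; split_ifs <;> omega)

/-- Decomposition `k*s + j` with `s<2`, `j<k` is unique. -/
lemma ksj_unique {k s j s' j' : ℕ} (hs : s < 2) (hj : j < k) (hs' : s' < 2) (hj' : j' < k)
    (h : k * s + j = k * s' + j') : s = s' ∧ j = j' := by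
  have hs01 : s = 0 ∨ s = 1 := by omega
  have hs01' : s' = 0 ∨ s' = 1 := by omega
  rcases hs01 with rfl | rfl <;> rcases hs01' with rfl | rfl <;> omega

lemma mkv_inj {k s j e s' j' e' : ℕ} (hs : s < 2) (hj : j < k) (he : e < 4)
    (hs' : s' < 2) (hj' : j' < k) (he' : e' < 4)
    (h : mkv k s j e = mkv k s' j' e') : s = s' ∧ j = j' ∧ e = e' := by
  have h1 := (mkv_coords (k := k) hs hj he).1
  have h2 := (mkv_coords (k := k) hs hj he).2.1
  have h3 := (mkv_coords (k := k) hs hj he).2.2.1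
  rw [h] at h1 h2 h3
  rw [(mkv_coords (k := k) hs' hj' he').1] at h1
  rw [(mkv_coords (k := k) hs' hj' he').2.1] at h2
  rw [(mkv_coords (k := k) hs' hj' he').2.2.1] at h3
  exact ⟨h1.symm, h2.symm, h3.symm⟩

/-! ### Point-level coordinates -/

variable {k : ℕ}

lemma pt_mem (m : Pt k) : 1 ≤ m.val ∧ m.val ≤ 8 * k := Finset.mem_Icc.mp m.2

def mkPt (hk : 1 ≤ k) (j : Fin k) (a : Fin 8) : Pt k :=
  ⟨mkv k (a.val % 2) j.val (a.val / 2), by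
    rw [Finset.mem_Icc]
    have h := mkv_coords (k := k) (s := a.val % 2) (j := j.val) (e := a.val / 2)
      (by omega) j.isLt (by omega)
    exact ⟨h.2.2.2.2.1, h.2.2.2.2.2⟩⟩

def rowP (hk : 1 ≤ k) (m : Pt k) : Fin k :=
  ⟨rwV k m.val, rwV_lt (pt_mem m).1 (pt_mem m).2⟩

def colP (hk : 1 ≤ k) (m : Pt k) : Fin 8 :=
  ⟨2 * eeV m.val + sdV k m.val, by
    have := eeV_lt m.val; have := sdV_lt k m.val; omega⟩

lemma mkPt_val (hk : 1 ≤ k) (j : Fin k) (a : Fin 8) :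
    (mkPt hk j a).val = mkv k (a.val % 2) j.val (a.val / 2) := rfl

lemma rowP_mkPt (hk : 1 ≤ k) (j : Fin k) (a : Fin 8) : rowP hk (mkPt hk j a) = j := by
  apply Fin.ext
  show rwV k (mkPt hk j a).val = j.val
  rw [mkPt_val]
  exact (mkv_coords (by omega) j.isLt (by omega)).2.1

lemma colP_mkPt (hk : 1 ≤ k) (j : Fin k) (a : Fin 8) : colP hk (mkPt hk j a) = a := by
  apply Fin.ext
  show 2 * eeV (mkPt hk j a).val + sdV k (mkPt hk j a).val = a.val
  rw [mkPt_val]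
  rw [(mkv_coords (by omega) j.isLt (by omega)).2.2.1,
    (mkv_coords (by omega) j.isLt (by omega)).1]
  omega

lemma mkPt_rowP_colP (hk : 1 ≤ k) (m : Pt k) : mkPt hk (rowP hk m) (colP hk m) = m := by
  apply Subtype.ext
  rw [mkPt_val]
  have h1 := pt_mem m
  have hrepr := val_repr (k := k) h1.1 h1.2
  have hee := eeV_lt m.val
  have hsd := sdV_lt k m.val
  have hcv : (colP hk m).val = 2 * eeV m.val + sdV k m.val := rfl
  have h2 : (colP hk m).val % 2 = sdV k m.val := by omega
  have h3 : (colP hk m).val / 2 = eeV m.val := by omega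
  rw [h2, h3]
  exact hrepr.symm

lemma eeV_colP (hk : 1 ≤ k) (m : Pt k) : eeV m.val = (colP hk m).val / 2 := by
  have hcv : (colP hk m).val = 2 * eeV m.val + sdV k m.val := rfl
  have := sdV_lt k m.val; omega

lemma sdV_colP (hk : 1 ≤ k) (m : Pt k) : sdV k m.val = (colP hk m).val % 2 := by
  have hcv : (colP hk m).val = 2 * eeV m.val + sdV k m.val := rfl
  have := sdV_lt k m.val; omega

lemma bkV_pt (hk : 1 ≤ k) (m : Pt k) :
    bkV m.val = k * ((colP hk m).val % 2) + (rowP hk m).val := by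
  rw [bkV_eq k m.val, ← sdV_colP hk m]; rfl

/-- Points are determined by block and offset. -/
lemma pt_ext_bk_ee {m m' : Pt k} (hbk : bkV m.val = bkV m'.val)
    (hee : eeV m.val = eeV m'.val) : m = m' := by
  apply Subtype.ext
  have h1 := pt_mem m; have h2 := pt_mem m'
  unfold bkV at hbk; unfold eeV at hee; omega



/-! ### rows -/

lemma mem_RowSet_iff (hk : 1 ≤ k) {J : ℕ} (hJ1 : 1 ≤ J) (hJ2 : J ≤ k) (m : Pt k) :
    m ∈ RowSet k J ↔ rwV k m.val = J - 1 := by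
  have h1 := pt_mem m
  simp only [RowSet, Set.mem_setOf_eq, Set.mem_insert_iff, Set.mem_singleton_iff]
  unfold rwV bkV
  split_ifs <;> omega

lemma rwV_r {r : Equiv.Perm (Pt k)} (hk : 1 ≤ k) (hr : InRowGroup k r) (m : Pt k) :
    rwV k (r m).val = rwV k m.val := by
  have h1 := pt_mem m
  set J := rwV k m.val + 1 with hJ
  have hJ1 : 1 ≤ J := by omega
  have hJ2 : J ≤ k := by have : rwV k m.val < k := by unfold rwV bkV; split_ifs <;> omega
                         omega
  have hm : m ∈ RowSet k J := (mem_RowSet_iff hk hJ1 hJ2 m).2 (by omega)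
  have : r m ∈ RowSet k J := by
    rw [← hr J hJ1 hJ2]; exact ⟨m, hm, rfl⟩
  have := (mem_RowSet_iff hk hJ1 hJ2 (r m)).1 this
  omega

lemma rwV_r_inv {r : Equiv.Perm (Pt k)} (hk : 1 ≤ k) (hr : InRowGroup k r) (m : Pt k) :
    rwV k (r⁻¹ m).val = rwV k m.val := by
  have h1 := pt_mem m
  set J := rwV k m.val + 1 with hJ
  have hJ1 : 1 ≤ J := by omega
  have hJ2 : J ≤ k := by have : rwV k m.val < k := by unfold rwV bkV; split_ifs <;> omega
                         omega
  have hm : m ∈ RowSet k J := (mem_RowSet_iff hk hJ1 hJ2 m).2 (by omega)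
  rw [← hr J hJ1 hJ2] at hm
  obtain ⟨m₀, hm₀, hrm₀⟩ := hm
  have hinv : r⁻¹ m = m₀ := by rw [← hrm₀]; simp
  rw [hinv]
  have := (mem_RowSet_iff hk hJ1 hJ2 m₀).1 hm₀
  omega

/-! ### columns -/

lemma colVal_coords (hk : 1 ≤ k) {i : Fin 8} {J : ℕ} (hJ1 : 1 ≤ J) (hJ2 : J ≤ k) (m : Pt k) :
    m.val = colVal k i J ↔ ((colP hk m).val = i.val ∧ rwV k m.val = J - 1) := by
  have h1 := pt_mem m
  have hcv : (colP hk m).val = 2 * eeV m.val + sdV k m.val := rfl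
  rw [hcv]
  fin_cases i <;>
    · simp only [colVal, eeV, sdV, rwV, bkV]
      split_ifs <;>
        first
          | omega
          | (simp only [false_and, and_false, false_iff, iff_false]; omega)

lemma mem_ColSet_iff (hk : 1 ≤ k) (i : Fin 8) (m : Pt k) :
    m ∈ ColSet k i ↔ (colP hk m).val = i.val := by
  constructor
  · rintro ⟨J, hJ1, hJ2, hval⟩
    exact ((colVal_coords hk hJ1 hJ2 m).1 hval).1
  · intro h
    have h1 := pt_mem m
    refine ⟨rwV k m.val + 1, by omega, ?_, ?_⟩
    · have : rwV k m.val < k := by unfold rwV bkV; split_ifs <;> omega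
      omega
    · exact (colVal_coords hk (by omega) (by
        have : rwV k m.val < k := by unfold rwV bkV; split_ifs <;> omega
        omega) m).2 ⟨h, by omega⟩

lemma colP_c {c : Equiv.Perm (Pt k)} (hk : 1 ≤ k) (hc : InColGroup k c) (m : Pt k) :
    colP hk (c m) = colP hk m := by
  have hm : m ∈ ColSet k (colP hk m) := (mem_ColSet_iff hk _ m).2 rfl
  have : c m ∈ ColSet k (colP hk m) := by
    rw [← hc (colP hk m)]; exact ⟨m, hm, rfl⟩
  exact Fin.ext ((mem_ColSet_iff hk _ (c m)).1 this)

lemma colP_c_inv {c : Equiv.Perm (Pt k)} (hk : 1 ≤ k) (hc : InColGroup k c) (m : Pt k) :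
    colP hk (c⁻¹ m) = colP hk m := by
  have hm : m ∈ ColSet k (colP hk m) := (mem_ColSet_iff hk _ m).2 rfl
  rw [← hc (colP hk m)] at hm
  obtain ⟨m₀, hm₀, hcm₀⟩ := hm
  have hinv : c⁻¹ m = m₀ := by rw [← hcm₀]; simp
  rw [hinv]
  exact Fin.ext ((mem_ColSet_iff hk _ m₀).1 hm₀)

/-! ### F -/

variable {F : Equiv.Perm (Pt k)}

lemma F_coords (hF : ∀ m : Pt k, (F m).val = if m.val ≤ 4 * k then m.val + 4 * k
    else m.val - 4 * k) (m : Pt k) :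
    sdV k (F m).val = 1 - sdV k m.val ∧ rwV k (F m).val = rwV k m.val ∧
      eeV (F m).val = eeV m.val ∧ (F m).val ≠ m.val := by
  have h1 := pt_mem m
  have h2 := pt_mem (F m)
  have h3 := hF m
  unfold sdV rwV bkV eeV at *
  split_ifs at * <;> omega

lemma F_invol (hF : ∀ m : Pt k, (F m).val = if m.val ≤ 4 * k then m.val + 4 * k
    else m.val - 4 * k) (m : Pt k) : F (F m) = m := by
  apply Subtype.ext
  have h1 := pt_mem m
  have h2 := pt_mem (F m)
  have h3 := hF m
  have h4 := hF (F m)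
  split_ifs at * <;> omega

/-! ### the subgroup B -/

def Bprop (b : Equiv.Perm (Pt k)) : Prop :=
  ∃ ε : ℕ → Bool, ∀ m : Pt k, (b m).val = if ε (bkV m.val) then twV m.val else m.val

lemma twV_facts {v : ℕ} (h1 : 1 ≤ v) (h2 : v ≤ 8 * k) :
    bkV (twV v) = bkV v ∧ eeV (twV v) = twE (eeV v) ∧ twV (twV v) = v ∧
      1 ≤ twV v ∧ twV v ≤ 8 * k := by
  unfold twV twE bkV eeV
  split_ifs <;> omega

lemma Bprop_of_mem {b : Equiv.Perm (Pt k)} (hb : b ∈ Bsub k) : Bprop b := by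
  induction hb using Subgroup.closure_induction with
  | mem b hb =>
    obtain ⟨j₀, hgen⟩ := hb
    have hj₀ := Finset.mem_Icc.mp j₀.2
    refine ⟨fun t => decide (t = j₀.val - 1), fun m => ?_⟩
    have h1 := pt_mem m
    rw [hgen m]
    simp only [decide_eq_true_eq, twV]
    split_ifs <;> unfold eeV bkV at * <;> omega
  | one => exact ⟨fun _ => false, fun m => by simp⟩
  | mul b₁ b₂ _ _ ih₁ ih₂ =>
    obtain ⟨ε₁, h₁⟩ := ih₁
    obtain ⟨ε₂, h₂⟩ := ih₂
    refine ⟨fun t => xor (ε₂ t) (ε₁ t), fun m => ?_⟩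
    beta_reduce
    have h1 := pt_mem m
    have htw := twV_facts (k := k) h1.1 h1.2
    have hv₂ := h₂ m
    have hv₁ := h₁ (b₂ m)
    have hmul : ((b₁ * b₂) m).val = (b₁ (b₂ m)).val := rfl
    rw [hmul, hv₁]
    cases hc₂ : ε₂ (bkV m.val)
    · rw [hc₂] at hv₂
      simp only [Bool.false_eq_true, if_false] at hv₂
      have hbk2 : bkV (b₂ m).val = bkV m.val := by rw [hv₂]
      rw [hbk2, hv₂, Bool.false_xor]
    · rw [hc₂] at hv₂
      simp only [if_true] at hv₂
      have hbk2 : bkV (b₂ m).val = bkV m.val := by rw [hv₂]; exact htw.1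
      rw [hbk2, Bool.true_xor]
      cases hc₁ : ε₁ (bkV m.val)
      · simp only [Bool.not_false, Bool.false_eq_true, if_false, if_true]
        exact hv₂
      · simp only [Bool.not_true, Bool.false_eq_true, if_false, if_true]
        rw [hv₂]
        exact htw.2.2.1
  | inv b _ ih =>
    obtain ⟨ε, h⟩ := ih
    refine ⟨ε, fun m => ?_⟩
    have hm' := h (b⁻¹ m)
    rw [Equiv.Perm.apply_inv_self] at hm'
    have h1 := pt_mem (b⁻¹ m)
    have htw := twV_facts (k := k) h1.1 h1.2
    cases hc : ε (bkV (b⁻¹ m).val)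
    · rw [hc] at hm'
      simp only [Bool.false_eq_true, if_false] at hm'
      rw [hm', hc]
      simp
    · rw [hc] at hm'
      simp only [if_true] at hm'
      have hbk : bkV m.val = bkV (b⁻¹ m).val := by rw [hm']; exact htw.1
      rw [hbk, hc]
      simp only [if_true]
      rw [hm']
      exact htw.2.2.1.symm


/-! ### D and Q coordinates -/

def blkJ (m : Pt k) : Blk k :=
  ⟨bkV m.val + 1, by
    have h1 := pt_mem m
    rw [Finset.mem_Icc]
    unfold bkV; omega⟩

lemma d_coords {d : Equiv.Perm (Pt k)} (hd : d ∈ Dset k) :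
    ∃ π : Equiv.Perm (Blk k), ∀ m : Pt k,
      bkV (d m).val + 1 = (π (blkJ m)).val ∧ eeV (d m).val = eeV m.val := by
  obtain ⟨π, hπ⟩ := hd
  refine ⟨π, fun m => ?_⟩
  have h1 := pt_mem m
  have hme : m.val = 4 * (blkJ m).val - (3 - eeV m.val) := by
    show m.val = 4 * (bkV m.val + 1) - (3 - eeV m.val)
    unfold bkV eeV; omega
  have hv := hπ (blkJ m) (3 - eeV m.val) (by omega) m hme
  have hT := Finset.mem_Icc.mp (π (blkJ m)).2
  unfold bkV eeV at hv ⊢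
  omega

lemma q_coords {q : Equiv.Perm (Pt k)} (hq : q ∈ Qset k) :
    ∃ (π : Equiv.Perm (Blk k)) (ε : ℕ → Bool), ∀ m : Pt k,
      bkV (q m).val + 1 = (π (blkJ m)).val ∧
      eeV (q m).val = (if ε (bkV (q m).val) then twE (eeV m.val) else eeV m.val) := by
  obtain ⟨b, hb, d, hd, rfl⟩ := hq
  obtain ⟨π, hπ⟩ := d_coords hd
  obtain ⟨ε, hε⟩ := Bprop_of_mem hb
  refine ⟨π, ε, fun m => ?_⟩
  have hdm := hπ m
  have hbm := hε (d m)
  have h1 := pt_mem (d m)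
  have htw := twV_facts (k := k) h1.1 h1.2
  have hmul : ((b * d) m).val = (b (d m)).val := rfl
  rw [hmul, hbm]
  cases hc : ε (bkV (d m).val)
  · simp only [Bool.false_eq_true, if_false]
    rw [hc]
    simp only [Bool.false_eq_true, if_false]
    exact hdm
  · simp only [if_true]
    rw [htw.1, hc]
    simp only [if_true]
    exact ⟨hdm.1, by rw [htw.2.1, hdm.2]⟩

/-- The key structural property of `M = q F q⁻¹` for `q ∈ Q`:
it maps blocks to blocks, shifting the offset pair coherently. -/
lemma Qmain (hk : 1 ≤ k) {q F : Equiv.Perm (Pt k)} (hq : q ∈ Qset k)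
    (hF : ∀ m : Pt k, (F m).val = if m.val ≤ 4 * k then m.val + 4 * k else m.val - 4 * k)
    (p p' : Pt k)
    (hbk : bkV p.val = bkV p'.val)
    (hee : eeV p'.val = eeV p.val + 1)
    (he0 : eeV p.val = 0 ∨ eeV p.val = 2) :
    bkV ((q * F * q⁻¹) p').val = bkV ((q * F * q⁻¹) p).val ∧
    eeV ((q * F * q⁻¹) p').val = eeV ((q * F * q⁻¹) p).val + 1 ∧
    (eeV ((q * F * q⁻¹) p).val = 0 ∨ eeV ((q * F * q⁻¹) p).val = 2) := by
  obtain ⟨π, ε, hqc⟩ := q_coords hq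
  set m : Pt k := q⁻¹ p with hm
  set m' : Pt k := q⁻¹ p' with hm'
  have hqm : q m = p := by simp [hm]
  have hqm' : q m' = p' := by simp [hm']
  -- coordinates of p in terms of m
  have h1 := hqc m
  rw [hqm] at h1
  have h1' := hqc m'
  rw [hqm'] at h1'
  -- blocks of m and m' are equal
  have hπeq : (π (blkJ m)).val = (π (blkJ m')).val := by omega
  have hblk : blkJ m = blkJ m' :=
    π.injective (Subtype.ext hπeq)
  have hbkm : bkV m.val = bkV m'.val := by
    have := congrArg Subtype.val hblk
    simpa [blkJ] using this
  -- sides and rows of m and m' are equal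
  have hmem := pt_mem m
  have hmem' := pt_mem m'
  have hsd : sdV k m.val = sdV k m'.val ∧ rwV k m.val = rwV k m'.val := by
    apply ksj_unique (sdV_lt k m.val) (rwV_lt hmem.1 hmem.2) (sdV_lt k m'.val)
      (rwV_lt hmem'.1 hmem'.2)
    rw [← bkV_eq, ← bkV_eq, hbkm]
  -- F preserves row/offset, flips side
  have hFm := F_coords hF m
  have hFm' := F_coords hF m'
  have hbkF : bkV (F m).val = bkV (F m').val := by
    rw [bkV_eq k, bkV_eq k, hFm.1, hFm.2.1, hFm'.1, hFm'.2.1, hsd.1, hsd.2]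
  have hblkF : blkJ (F m) = blkJ (F m') := Subtype.ext (by simp [blkJ, hbkF])
  -- M p = q (F m)
  have hMp : (q * F * q⁻¹) p = q (F m) := by
    simp [Equiv.Perm.mul_apply, hm]
  have hMp' : (q * F * q⁻¹) p' = q (F m') := by
    simp [Equiv.Perm.mul_apply, hm']
  have h2 := hqc (F m)
  have h2' := hqc (F m')
  rw [← hMp] at h2
  rw [← hMp'] at h2'
  -- first conclusion
  have hc1 : bkV ((q * F * q⁻¹) p').val = bkV ((q * F * q⁻¹) p).val := by
    have : (π (blkJ (F m))).val = (π (blkJ (F m'))).val := by rw [hblkF]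
    omega
  refine ⟨hc1, ?_⟩
  -- offset bookkeeping
  have hee_m := h1.2
  have hee_m' := h1'.2
  have hee_M := h2.2
  have hee_M' := h2'.2
  rw [hFm.2.2.1] at hee_M
  rw [hFm'.2.2.1] at hee_M'
  have hbkp' : bkV p'.val = bkV p.val := hbk.symm
  rw [hbkp'] at hee_m'
  rw [hc1] at hee_M'
  have he4 := eeV_lt p.val
  have he4' := eeV_lt p'.val
  have hem4 := eeV_lt m.val
  have hem4' := eeV_lt m'.val
  -- the twists agree; now pure case analysis
  have final : ∀ t1 t2 : Bool,
      eeV p.val = (if t1 then twE (eeV m.val) else eeV m.val) →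
      eeV p'.val = (if t1 then twE (eeV m'.val) else eeV m'.val) →
      eeV ((q * F * q⁻¹) p).val = (if t2 then twE (eeV m.val) else eeV m.val) →
      eeV ((q * F * q⁻¹) p').val = (if t2 then twE (eeV m'.val) else eeV m'.val) →
      eeV ((q * F * q⁻¹) p').val = eeV ((q * F * q⁻¹) p).val + 1 ∧
        (eeV ((q * F * q⁻¹) p).val = 0 ∨ eeV ((q * F * q⁻¹) p).val = 2) := by
    intro t1 t2 e1 e2 e3 e4
    cases t1 <;> cases t2 <;>
      simp only [Bool.false_eq_true, if_false, if_true, twE] at e1 e2 e3 e4 <;>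
        (try split_ifs at e1 e2 e3 e4) <;> omega
  exact final (ε (bkV p.val)) (ε (bkV ((q * F * q⁻¹) p).val)) hee_m hee_m' hee_M hee_M'


/-! ### the permutations induced by `c` on the columns -/

def ccol (hk : 1 ≤ k) (c : Equiv.Perm (Pt k)) (hc : InColGroup k c) (a : Fin 8) :
    Equiv.Perm (Fin k) where
  toFun j := rowP hk (c (mkPt hk j a))
  invFun j := rowP hk (c⁻¹ (mkPt hk j a))
  left_inv j := by
    have h1 : colP hk (c (mkPt hk j a)) = a := by rw [colP_c hk hc, colP_mkPt]
    have h2 : mkPt hk (rowP hk (c (mkPt hk j a))) a = c (mkPt hk j a) := by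
      conv_rhs => rw [← mkPt_rowP_colP hk (c (mkPt hk j a))]
      rw [h1]
    show rowP hk (c⁻¹ (mkPt hk (rowP hk (c (mkPt hk j a))) a)) = j
    rw [h2, Equiv.Perm.inv_apply_self, rowP_mkPt]
  right_inv j := by
    have h1 : colP hk (c⁻¹ (mkPt hk j a)) = a := by rw [colP_c_inv hk hc, colP_mkPt]
    have h2 : mkPt hk (rowP hk (c⁻¹ (mkPt hk j a))) a = c⁻¹ (mkPt hk j a) := by
      conv_rhs => rw [← mkPt_rowP_colP hk (c⁻¹ (mkPt hk j a))]
      rw [h1]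
    show rowP hk (c (mkPt hk (rowP hk (c⁻¹ (mkPt hk j a))) a)) = j
    rw [h2, Equiv.Perm.apply_inv_self, rowP_mkPt]

lemma ccol_apply (hk : 1 ≤ k) (c : Equiv.Perm (Pt k)) (hc : InColGroup k c) (a : Fin 8)
    (j : Fin k) : ccol hk c hc a j = rowP hk (c (mkPt hk j a)) := rfl

lemma ccol_inv_apply (hk : 1 ≤ k) (c : Equiv.Perm (Pt k)) (hc : InColGroup k c) (a : Fin 8)
    (j : Fin k) : (ccol hk c hc a)⁻¹ j = rowP hk (c⁻¹ (mkPt hk j a)) := rfl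

lemma rowP_c (hk : 1 ≤ k) {c : Equiv.Perm (Pt k)} (hc : InColGroup k c) (m : Pt k) :
    rowP hk (c m) = ccol hk c hc (colP hk m) (rowP hk m) := by
  rw [ccol_apply, mkPt_rowP_colP]

lemma rowP_c_inv (hk : 1 ≤ k) {c : Equiv.Perm (Pt k)} (hc : InColGroup k c) (m : Pt k) :
    rowP hk (c⁻¹ m) = (ccol hk c hc (colP hk m))⁻¹ (rowP hk m) := by
  rw [ccol_inv_apply, mkPt_rowP_colP]

def ptEquiv (hk : 1 ≤ k) : Pt k ≃ Fin k × Fin 8 where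
  toFun m := (rowP hk m, colP hk m)
  invFun x := mkPt hk x.1 x.2
  left_inv m := mkPt_rowP_colP hk m
  right_inv x := by
    cases x with
    | mk j a =>
      show (rowP hk (mkPt hk j a), colP hk (mkPt hk j a)) = (j, a)
      rw [rowP_mkPt, colP_mkPt]

lemma sign_ccol (hk : 1 ≤ k) (c : Equiv.Perm (Pt k)) (hc : InColGroup k c) :
    Equiv.Perm.sign c = ∏ a : Fin 8, Equiv.Perm.sign (ccol hk c hc a) := by
  have hcongr : (ptEquiv hk).permCongr c = Equiv.prodCongrLeft (fun a => ccol hk c hc a) := by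
    apply Equiv.ext
    rintro ⟨j, a⟩
    rw [Equiv.permCongr_apply, Equiv.prodCongrLeft_apply]
    have hsymm : (ptEquiv hk).symm (j, a) = mkPt hk j a := rfl
    rw [hsymm]
    have h1 : colP hk (c (mkPt hk j a)) = a := by rw [colP_c hk hc, colP_mkPt]
    show (rowP hk (c (mkPt hk j a)), colP hk (c (mkPt hk j a))) = (ccol hk c hc a j, a)
    rw [h1, ccol_apply]
  rw [← Equiv.Perm.sign_permCongr (ptEquiv hk) c, hcongr,
    Equiv.Perm.sign_prodCongrLeft]

end SignCond

open SignCond in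
theorem sign_condition_rect' (k : ℕ) (hk : 1 ≤ k) (F : Equiv.Perm (Pt k))
    (hF : ∀ m : Pt k, (F m).val = if m.val ≤ 4 * k then m.val + 4 * k else m.val - 4 * k)
    (q c r : Equiv.Perm (Pt k))
    (hq : q ∈ Qset k) (hc : InColGroup k c) (hr : InRowGroup k r)
    (hqcr : q * F * q⁻¹ = (c * r) * F * (c * r)⁻¹) :
    Equiv.Perm.sign c = 1 := by
  classical
  set N : Equiv.Perm (Pt k) := r * F * r⁻¹ with hNdef
  have hM : q * F * q⁻¹ = c * N * c⁻¹ := by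
    rw [hqcr, hNdef]; group
  -- facts about N
  have hNapp : ∀ m : Pt k, N m = r (F (r⁻¹ m)) := fun m => rfl
  have hNrow : ∀ m : Pt k, rwV k (N m).val = rwV k m.val := by
    intro m
    rw [hNapp, rwV_r hk hr, (F_coords hF (r⁻¹ m)).2.1, rwV_r_inv hk hr]
  have hNfix : ∀ m : Pt k, N m ≠ m := by
    intro m h
    rw [hNapp] at h
    have h2 : F (r⁻¹ m) = r⁻¹ m := by
      have := congrArg (⇑r⁻¹) h
      simpa using this
    exact (F_coords hF (r⁻¹ m)).2.2.2 (congrArg Subtype.val h2)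
  have hNN : ∀ m : Pt k, N (N m) = m := by
    intro m
    rw [hNapp, hNapp, Equiv.Perm.inv_apply_self, F_invol hF]
    simp
  have hMapp : ∀ p : Pt k, (q * F * q⁻¹) p = c (N (c⁻¹ p)) := by
    intro p; rw [hM]; rfl
  -- the key relation
  have krel : ∀ (jhat : Fin k) (a : Fin 8), (a.val = 0 ∨ a.val = 1 ∨ a.val = 4 ∨ a.val = 5) →
      ∃ b : Fin 8, colP hk (N (mkPt hk jhat a)) = b ∧
        (b.val = 0 ∨ b.val = 1 ∨ b.val = 4 ∨ b.val = 5) ∧ b ≠ a ∧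
        ((ccol hk c hc (b + 2))⁻¹ * ccol hk c hc b) jhat =
          ((ccol hk c hc (a + 2))⁻¹ * ccol hk c hc a) jhat := by
    intro jhat a ha
    have h2v : ((2 : Fin 8)).val = 2 := rfl
    set a2 : Fin 8 := a + 2 with ha2def
    have ha2 : a2.val = a.val + 2 := by
      rw [ha2def, Fin.val_add, h2v]; omega
    set x := mkPt hk jhat a with hxdef
    set b := colP hk (N x) with hbdef
    refine ⟨b, rfl, ?_⟩
    have hrowNx : rowP hk (N x) = jhat := by
      apply Fin.ext
      show rwV k (N x).val = jhat.val
      rw [hNrow]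
      exact congrArg Fin.val (rowP_mkPt hk jhat a)
    have hNx : N x = mkPt hk jhat b := by
      conv_lhs => rw [← mkPt_rowP_colP hk (N x)]
      rw [hrowNx, ← hbdef]
    have hbne : b ≠ a := by
      intro h
      apply hNfix x
      rw [hNx, h, ← hxdef]
    -- the companion point
    set p : Pt k := c x with hpdef
    have hcolp : colP hk p = a := by rw [hpdef, colP_c hk hc, hxdef, colP_mkPt]
    have hrowp : rowP hk p = ccol hk c hc a jhat := by
      rw [hpdef, rowP_c hk hc, hxdef, colP_mkPt, rowP_mkPt]
    set p2 : Pt k := mkPt hk (rowP hk p) a2 with hp2def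
    set x2 : Pt k := c⁻¹ p2 with hx2def
    have hcolx2 : colP hk x2 = a2 := by rw [hx2def, colP_c_inv hk hc, hp2def, colP_mkPt]
    set j' : Fin k := rowP hk x2 with hj'def
    have hx2 : x2 = mkPt hk j' a2 := by
      conv_lhs => rw [← mkPt_rowP_colP hk x2]
      rw [hcolx2, ← hj'def]
    have hj' : j' = ((ccol hk c hc a2)⁻¹ * ccol hk c hc a) jhat := by
      rw [hj'def, hx2def, rowP_c_inv hk hc, hp2def, colP_mkPt, rowP_mkPt, hrowp]
      rfl
    set b2 : Fin 8 := colP hk (N x2) with hb2def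
    have hrowNx2 : rowP hk (N x2) = j' := by
      apply Fin.ext
      show rwV k (N x2).val = j'.val
      rw [hNrow]
      rfl
    have hNx2 : N x2 = mkPt hk j' b2 := by
      conv_lhs => rw [← mkPt_rowP_colP hk (N x2)]
      rw [hrowNx2, ← hb2def]
    -- images under M
    have hMp : (q * F * q⁻¹) p = c (mkPt hk jhat b) := by
      rw [hMapp p, hpdef, Equiv.Perm.inv_apply_self, hNx]
    have hMp2 : (q * F * q⁻¹) p2 = c (mkPt hk j' b2) := by
      rw [hMapp p2, ← hx2def, hNx2]
    have hcolMp : colP hk ((q * F * q⁻¹) p) = b := by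
      rw [hMp, colP_c hk hc, colP_mkPt]
    have hrowMp : rowP hk ((q * F * q⁻¹) p) = ccol hk c hc b jhat := by
      rw [hMp, rowP_c hk hc, colP_mkPt, rowP_mkPt]
    have hcolMp2 : colP hk ((q * F * q⁻¹) p2) = b2 := by
      rw [hMp2, colP_c hk hc, colP_mkPt]
    have hrowMp2 : rowP hk ((q * F * q⁻¹) p2) = ccol hk c hc b2 j' := by
      rw [hMp2, rowP_c hk hc, colP_mkPt, rowP_mkPt]
    -- apply Qmain
    have hcolp2 : colP hk p2 = a2 := by rw [hp2def, colP_mkPt]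
    have hrowp2 : rowP hk p2 = rowP hk p := by rw [hp2def, rowP_mkPt]
    have hbkp : bkV p.val = bkV p2.val := by
      rw [bkV_pt hk p, bkV_pt hk p2, hcolp, hcolp2, hrowp2]
      have : a2.val % 2 = a.val % 2 := by omega
      rw [this]
    have heep : eeV p.val = a.val / 2 := by rw [eeV_colP hk p, hcolp]
    have heep2 : eeV p2.val = a2.val / 2 := by rw [eeV_colP hk p2, hcolp2]
    obtain ⟨hQ1, hQ2, hQ3⟩ := Qmain hk hq hF p p2 hbkp
      (by rw [heep, heep2]; omega) (by rw [heep]; omega)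
    -- translate the conclusions
    have heeMp : eeV ((q * F * q⁻¹) p).val = b.val / 2 := by
      rw [eeV_colP hk _, hcolMp]
    have heeMp2 : eeV ((q * F * q⁻¹) p2).val = b2.val / 2 := by
      rw [eeV_colP hk _, hcolMp2]
    have hb45 : b.val = 0 ∨ b.val = 1 ∨ b.val = 4 ∨ b.val = 5 := by
      rw [heeMp] at hQ3
      have := b.isLt
      omega
    refine ⟨hb45, hbne, ?_⟩
    have hbkMp : bkV ((q * F * q⁻¹) p).val = k * (b.val % 2) + (ccol hk c hc b jhat).val := by
      rw [bkV_pt hk _, hcolMp, hrowMp]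
    have hbkMp2 : bkV ((q * F * q⁻¹) p2).val =
        k * (b2.val % 2) + (ccol hk c hc b2 j').val := by
      rw [bkV_pt hk _, hcolMp2, hrowMp2]
    rw [hbkMp, hbkMp2] at hQ1
    obtain ⟨hpar, hrows⟩ := ksj_unique (by omega) (ccol hk c hc b2 j').isLt (by omega)
      (ccol hk c hc b jhat).isLt hQ1
    rw [heeMp, heeMp2] at hQ2
    have hb2val : b2.val = b.val + 2 := by
      have h1 := b.isLt
      have h2 := b2.isLt
      omega
    have hb2eq : b2 = b + 2 := by
      apply Fin.ext
      rw [Fin.val_add, h2v, hb2val]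
      omega
    have hrowseq : ccol hk c hc b2 j' = ccol hk c hc b jhat := Fin.ext hrows
    calc ((ccol hk c hc (b + 2))⁻¹ * ccol hk c hc b) jhat
        = (ccol hk c hc (b + 2))⁻¹ (ccol hk c hc b jhat) := rfl
      _ = (ccol hk c hc b2)⁻¹ (ccol hk c hc b2 j') := by rw [← hb2eq, ← hrowseq]
      _ = j' := Equiv.Perm.inv_apply_self _ _
      _ = ((ccol hk c hc a2)⁻¹ * ccol hk c hc a) jhat := hj'
  -- the involution property of the induced matching on columns
  have hinv : ∀ (jhat : Fin k) (a : Fin 8),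
      colP hk (N (mkPt hk jhat (colP hk (N (mkPt hk jhat a))))) = a := by
    intro jhat a
    set x := mkPt hk jhat a with hxdef
    have hrowNx : rowP hk (N x) = jhat := by
      apply Fin.ext
      show rwV k (N x).val = jhat.val
      rw [hNrow]
      exact congrArg Fin.val (rowP_mkPt hk jhat a)
    have hNx : N x = mkPt hk jhat (colP hk (N x)) := by
      conv_lhs => rw [← mkPt_rowP_colP hk (N x)]
      rw [hrowNx]
    rw [← hNx, hNN, hxdef, colP_mkPt]
  -- the pairing condition
  have hcond : ∀ jhat : Fin k,
      ((((ccol hk c hc (0 + 2))⁻¹ * ccol hk c hc 0) jhat =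
          ((ccol hk c hc (1 + 2))⁻¹ * ccol hk c hc 1) jhat ∧
        ((ccol hk c hc (4 + 2))⁻¹ * ccol hk c hc 4) jhat =
          ((ccol hk c hc (5 + 2))⁻¹ * ccol hk c hc 5) jhat) ∨
      (((ccol hk c hc (0 + 2))⁻¹ * ccol hk c hc 0) jhat =
          ((ccol hk c hc (4 + 2))⁻¹ * ccol hk c hc 4) jhat ∧
        ((ccol hk c hc (1 + 2))⁻¹ * ccol hk c hc 1) jhat =
          ((ccol hk c hc (5 + 2))⁻¹ * ccol hk c hc 5) jhat) ∨
      (((ccol hk c hc (0 + 2))⁻¹ * ccol hk c hc 0) jhat =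
          ((ccol hk c hc (5 + 2))⁻¹ * ccol hk c hc 5) jhat ∧
        ((ccol hk c hc (1 + 2))⁻¹ * ccol hk c hc 1) jhat =
          ((ccol hk c hc (4 + 2))⁻¹ * ccol hk c hc 4) jhat)) := by
    intro jhat
    obtain ⟨b0, hb0col, hb04, hb0ne, hb0t⟩ := krel jhat 0 (by left; rfl)
    have hμ0 : colP hk (N (mkPt hk jhat b0)) = 0 := by
      have := hinv jhat 0
      rwa [hb0col] at this
    have hb0v : b0.val = 1 ∨ b0.val = 4 ∨ b0.val = 5 := by
      rcases hb04 with h | h | h | h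
      · exact absurd (Fin.ext h : b0 = 0) hb0ne
      · exact Or.inl h
      · exact Or.inr (Or.inl h)
      · exact Or.inr (Or.inr h)
    rcases hb0v with hb0v | hb0v | hb0v
    · -- b0 = 1 : pairs (0,1), (4,5)
      have hb0 : b0 = 1 := Fin.ext hb0v
      rw [hb0] at hb0t hμ0
      obtain ⟨b4, hb4col, hb44, hb4ne, hb4t⟩ := krel jhat 4 (by right; right; left; rfl)
      have hμ4 : colP hk (N (mkPt hk jhat b4)) = 4 := by
        have := hinv jhat 4
        rwa [hb4col] at this
      have hb4v : b4 = 5 := by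
        apply Fin.ext
        rcases hb44 with h | h | h | h
        · exfalso
          have hb40 : b4 = 0 := Fin.ext h
          rw [hb40] at hμ4
          rw [hb0col] at hμ4
          rw [hb0] at hμ4
          exact absurd hμ4 (by decide)
        · exfalso
          have hb41 : b4 = 1 := Fin.ext h
          rw [hb41] at hμ4
          rw [hμ0] at hμ4
          exact absurd hμ4 (by decide)
        · exact absurd (Fin.ext h : b4 = 4) hb4ne
        · exact h
      rw [hb4v] at hb4t
      exact Or.inl ⟨hb0t.symm, hb4t.symm⟩
    · -- b0 = 4 : pairs (0,4), (1,5)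
      have hb0 : b0 = 4 := Fin.ext hb0v
      rw [hb0] at hb0t hμ0
      obtain ⟨b1, hb1col, hb14, hb1ne, hb1t⟩ := krel jhat 1 (by right; left; rfl)
      have hμ1 : colP hk (N (mkPt hk jhat b1)) = 1 := by
        have := hinv jhat 1
        rwa [hb1col] at this
      have hb1v : b1 = 5 := by
        apply Fin.ext
        rcases hb14 with h | h | h | h
        · exfalso
          have hb10 : b1 = 0 := Fin.ext h
          rw [hb10] at hμ1
          rw [hb0col] at hμ1
          rw [hb0] at hμ1
          exact absurd hμ1 (by decide)
        · exact absurd (Fin.ext h : b1 = 1) hb1ne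
        · exfalso
          have hb14' : b1 = 4 := Fin.ext h
          rw [hb14'] at hμ1
          rw [hμ0] at hμ1
          exact absurd hμ1 (by decide)
        · exact h
      rw [hb1v] at hb1t
      exact Or.inr (Or.inl ⟨hb0t.symm, hb1t.symm⟩)
    · -- b0 = 5 : pairs (0,5), (1,4)
      have hb0 : b0 = 5 := Fin.ext hb0v
      rw [hb0] at hb0t hμ0
      obtain ⟨b1, hb1col, hb14, hb1ne, hb1t⟩ := krel jhat 1 (by right; left; rfl)
      have hμ1 : colP hk (N (mkPt hk jhat b1)) = 1 := by
        have := hinv jhat 1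
        rwa [hb1col] at this
      have hb1v : b1 = 4 := by
        apply Fin.ext
        rcases hb14 with h | h | h | h
        · exfalso
          have hb10 : b1 = 0 := Fin.ext h
          rw [hb10] at hμ1
          rw [hb0col] at hμ1
          rw [hb0] at hμ1
          exact absurd hμ1 (by decide)
        · exact absurd (Fin.ext h : b1 = 1) hb1ne
        · exact h
        · exfalso
          have hb15 : b1 = 5 := Fin.ext h
          rw [hb15] at hμ1
          rw [hμ0] at hμ1
          exact absurd hμ1 (by decide)
      rw [hb1v] at hb1t
      exact Or.inr (Or.inr ⟨hb0t.symm, hb1t.symm⟩)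
  -- apply the abstract sign lemma
  have hquad := sign_quadruple
    ((ccol hk c hc (0 + 2))⁻¹ * ccol hk c hc 0)
    ((ccol hk c hc (1 + 2))⁻¹ * ccol hk c hc 1)
    ((ccol hk c hc (4 + 2))⁻¹ * ccol hk c hc 4)
    ((ccol hk c hc (5 + 2))⁻¹ * ccol hk c hc 5)
    (fun s => hcond s)
  have e02 : (0 + 2 : Fin 8) = 2 := rfl
  have e12 : (1 + 2 : Fin 8) = 3 := rfl
  have e42 : (4 + 2 : Fin 8) = 6 := rfl
  have e52 : (5 + 2 : Fin 8) = 7 := rfl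
  rw [e02, e12, e42, e52] at hquad
  simp only [map_mul, map_inv] at hquad
  -- signs are self-inverse in ℤˣ
  have hselfinv : ∀ σ : Equiv.Perm (Fin k),
      (Equiv.Perm.sign σ)⁻¹ = Equiv.Perm.sign σ := fun σ =>
    inv_eq_of_mul_eq_one_right (Int.units_mul_self _)
  rw [hselfinv, hselfinv, hselfinv, hselfinv] at hquad
  rw [sign_ccol hk c hc, Fin.prod_univ_eight]
  apply Units.ext
  have key' := congrArg Units.val hquad
  simp only [Units.val_mul, Units.val_one] at key' ⊢
  linear_combination key'


/-- Let `F ∈ S_{8k}` be the involution `i ↦ 4k+i`, `4k+i ↦ i` (`i ∈ [4k]`).  For all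
`q ∈ Q = B·D`, `c` in the column group `C` and `r` in the row group `R` of the Young
tableau of the partition `(8,8,…,8)` of `8k`: if `q·F = cr·F` (conjugation action),
then `sgn(c) = 1`. -/
theorem sign_condition_rect (k : ℕ) (hk : 1 ≤ k) (F : Equiv.Perm (Pt k))
    (hF : ∀ m : Pt k, (F m).val = if m.val ≤ 4 * k then m.val + 4 * k else m.val - 4 * k)
    (q c r : Equiv.Perm (Pt k))
    (hq : q ∈ Qset k) (hc : InColGroup k c) (hr : InRowGroup k r)
    (hqcr : q * F * q⁻¹ = (c * r) * F * (c * r)⁻¹) :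
    Equiv.Perm.sign c = 1 :=
  sign_condition_rect' k hk F hF q c r hq hc hr hqcr
end

section
/- Let k ≥ 1 be an integer. In S_{8k}, let F be the involution with F(i) = 4k+i and F(4k+i) = i for i ∈ {1,…,4k}; let B be the subgroup generated by b_j := (4j−3, 4j−1)(4j−2, 4j) for j ∈ {1,…,2k}; let D be the set of d ∈ S_{8k} for which there exists π ∈ S_{2k} with d(4j−i) = 4π(j)−i for all j ∈ {1,…,2k}, i ∈ {0,1,2,3}; and let Q := {b·d : b ∈ B, d ∈ D}. Let R be the group of all r ∈ S_{8k} with r({2, 4k+2}) = {2, 4k+2} (equivalently, r preserves both the row {2, 4k+2} and its complement {1,…,8k} \ {2, 4k+2}). Let C be the group of all c ∈ S_{8k} that fix every point outside {1, 2, 4k+1, 4k+2} and satisfy c({1,2}) = {1,2} and c({4k+1, 4k+2}) = {4k+1, 4k+2}. Then for all q ∈ Q, c ∈ C, r ∈ R: if q F q⁻¹ = (c r) F (c r)⁻¹, then sgn(c) = 1. -/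
/-- The second row `{2, 4k+2}` of the Young tableau of the partition `(8k−2, 2)`. -/
def SecondRow (k : ℕ) : Set (Pt k) := {m | m.val = 2 ∨ m.val = 4 * k + 2}

/-- `r` belongs to the row group `R`: it maps `{2, 4k+2}` onto itself (hence also its
complement onto itself). -/
def InRowGroup' (k : ℕ) (r : Equiv.Perm (Pt k)) : Prop :=
  (⇑r '' SecondRow k) = SecondRow k

/-- `c` belongs to the column group `C`: it fixes every point outside
`{1, 2, 4k+1, 4k+2}`, maps `{1, 2}` onto itself and maps `{4k+1, 4k+2}` onto itself. -/
def InColGroup' (k : ℕ) (c : Equiv.Perm (Pt k)) : Prop :=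
  (∀ m : Pt k, ¬ (m.val = 1 ∨ m.val = 2 ∨ m.val = 4 * k + 1 ∨ m.val = 4 * k + 2) →
    c m = m) ∧
  (⇑c '' {m : Pt k | m.val = 1 ∨ m.val = 2}) = {m : Pt k | m.val = 1 ∨ m.val = 2} ∧
  (⇑c '' {m : Pt k | m.val = 4 * k + 1 ∨ m.val = 4 * k + 2})
    = {m : Pt k | m.val = 4 * k + 1 ∨ m.val = 4 * k + 2}


/-- Auxiliary: the subgroup of parity-preserving permutations of `{1,…,8k}`. -/
def ParitySub (k : ℕ) : Subgroup (Equiv.Perm (Pt k)) where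
  carrier := {g | ∀ m : Pt k, (g m).val % 2 = m.val % 2}
  one_mem' := fun _ => rfl
  mul_mem' := by
    intro a b ha hb m
    have h1 : ((a * b) m) = a (b m) := rfl
    rw [h1, ha (b m), hb m]
  inv_mem' := by
    intro a ha m
    have := ha (a⁻¹ m)
    rw [(Equiv.Perm.eq_inv_iff_eq.mp rfl : a (a⁻¹ m) = m)] at this
    exact this.symm

lemma bgen_parity (k : ℕ) {b : Equiv.Perm (Pt k)} (hb : IsBGen k b) :
    b ∈ ParitySub k := by
  obtain ⟨j, hj⟩ := hb
  intro m
  have hjb := j.2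
  rw [Finset.mem_Icc] at hjb
  rw [hj m]
  split_ifs <;> omega

lemma dset_parity (k : ℕ) {d : Equiv.Perm (Pt k)} (hd : d ∈ Dset k) :
    d ∈ ParitySub k := by
  obtain ⟨π, hπ⟩ := hd
  intro m
  have hm := m.2
  rw [Finset.mem_Icc] at hm
  have hjmem : (m.val + 3) / 4 ∈ Finset.Icc 1 (2 * k) := by rw [Finset.mem_Icc]; omega
  have hi : 4 * ((m.val + 3) / 4) - m.val ≤ 3 := by omega
  have hmeq : m.val = 4 * ((m.val + 3) / 4) - (4 * ((m.val + 3) / 4) - m.val) := by omega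
  have hdm := hπ ⟨(m.val + 3) / 4, hjmem⟩ (4 * ((m.val + 3) / 4) - m.val) hi m hmeq
  have hπj := (π ⟨(m.val + 3) / 4, hjmem⟩).2
  rw [Finset.mem_Icc] at hπj
  omega

/-- Let `F ∈ S_{8k}` be the involution `i ↦ 4k+i`, `4k+i ↦ i` (`i ∈ [4k]`).  For all
`q ∈ Q = B·D`, `c` in the column group `C` and `r` in the row group `R` of the Young
tableau of the partition `(8k−2, 2)` of `8k`: if `q·F = cr·F` (conjugation action),
then `sgn(c) = 1`. -/
theorem sign_condition_hook (k : ℕ) (hk : 1 ≤ k) (F : Equiv.Perm (Pt k))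
    (hF : ∀ m : Pt k, (F m).val = if m.val ≤ 4 * k then m.val + 4 * k else m.val - 4 * k)
    (q c r : Equiv.Perm (Pt k))
    (hq : q ∈ Qset k) (hc : InColGroup' k c) (hr : InRowGroup' k r)
    (hqcr : q * F * q⁻¹ = (c * r) * F * (c * r)⁻¹) :
    Equiv.Perm.sign c = 1 := by
  classical
  -- parity of q F q⁻¹
  obtain ⟨b, hb, d, hd, hqbd⟩ := hq
  have hqP : q ∈ ParitySub k := by
    rw [hqbd]
    exact mul_mem ((Subgroup.closure_le (ParitySub k)).mpr
      (fun x hx => bgen_parity k hx) hb) (dset_parity k hd)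
  have hFP : F ∈ ParitySub k := by
    intro m
    have hm := m.2
    rw [Finset.mem_Icc] at hm
    rw [hF m]
    split_ifs <;> omega
  have hM : (q * F * q⁻¹) ∈ ParitySub k := mul_mem (mul_mem hqP hFP) (inv_mem hqP)
  -- named points
  obtain ⟨p1, hp1v⟩ : ∃ p : Pt k, p.val = 1 :=
    ⟨⟨1, by rw [Finset.mem_Icc]; omega⟩, rfl⟩
  obtain ⟨p2, hp2v⟩ : ∃ p : Pt k, p.val = 2 :=
    ⟨⟨2, by rw [Finset.mem_Icc]; omega⟩, rfl⟩
  obtain ⟨q1, hq1v⟩ : ∃ p : Pt k, p.val = 4 * k + 1 :=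
    ⟨⟨4 * k + 1, by rw [Finset.mem_Icc]; omega⟩, rfl⟩
  obtain ⟨q2, hq2v⟩ : ∃ p : Pt k, p.val = 4 * k + 2 :=
    ⟨⟨4 * k + 2, by rw [Finset.mem_Icc]; omega⟩, rfl⟩
  have nev : ∀ {a b : Pt k}, a.val ≠ b.val → a ≠ b := fun h h' => (h (h' ▸ rfl)).elim
  have np12 : p1 ≠ p2 := nev (by omega)
  have nq12 : q1 ≠ q2 := nev (by omega)
  have np1q1 : p1 ≠ q1 := nev (by omega)
  have np1q2 : p1 ≠ q2 := nev (by omega)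
  have np2q1 : p2 ≠ q1 := nev (by omega)
  have np2q2 : p2 ≠ q2 := nev (by omega)
  -- F on the second row
  have hFp2 : F p2 = q2 := by
    apply Subtype.ext
    have h := hF p2
    rw [hp2v, if_pos (by omega)] at h
    omega
  have hFq2 : F q2 = p2 := by
    apply Subtype.ext
    have h := hF q2
    rw [hq2v, if_neg (by omega)] at h
    omega
  -- r F r⁻¹ maps p2 to q2
  have hrkey : r (F (r⁻¹ p2)) = q2 := by
    have hmem : p2 ∈ ⇑r '' SecondRow k := by
      rw [hr]; exact Or.inl hp2v
    obtain ⟨y, hy, hry⟩ := hmem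
    have hyinv : r⁻¹ p2 = y := by rw [← hry, Equiv.Perm.inv_eq_iff_eq]
    rw [hyinv]
    have hq2mem : r q2 ∈ SecondRow k := by
      rw [← hr]; exact ⟨q2, Or.inr hq2v, rfl⟩
    have hp2mem : r p2 ∈ SecondRow k := by
      rw [← hr]; exact ⟨p2, Or.inl hp2v, rfl⟩
    rcases hy with hy | hy
    · have hy' : y = p2 := Subtype.ext (by omega)
      rw [hy', hFp2]
      have hr2 : r p2 = p2 := hy' ▸ hry
      rcases hq2mem with h2 | h2
      · exfalso
        have h3 : r q2 = p2 := Subtype.ext (by omega)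
        exact np2q2 (r.injective (h3.trans hr2.symm)).symm
      · exact Subtype.ext (by omega)
    · have hy' : y = q2 := Subtype.ext (by omega)
      rw [hy', hFq2]
      have hrq2 : r q2 = p2 := hy' ▸ hry
      rcases hp2mem with h2 | h2
      · exfalso
        have h3 : r p2 = p2 := Subtype.ext (by omega)
        exact np2q2 (r.injective (h3.trans hrq2.symm))
      · exact Subtype.ext (by omega)
  -- key matching equation
  have hkey : (q * F * q⁻¹) (c p2) = c q2 := by
    rw [hqcr]
    simp only [mul_inv_rev, Equiv.Perm.mul_apply,
      (Equiv.Perm.inv_eq_iff_eq.mpr rfl : c⁻¹ (c p2) = p2)]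
    exact congrArg c hrkey
  have hpar := hM (c p2)
  rw [hkey] at hpar
  -- where c sends the four points
  obtain ⟨hcfix, hc12, hc34⟩ := hc
  have hcp2m : (c p2).val = 1 ∨ (c p2).val = 2 := by
    have : c p2 ∈ ⇑c '' {m : Pt k | m.val = 1 ∨ m.val = 2} :=
      ⟨p2, Or.inr hp2v, rfl⟩
    rw [hc12] at this; exact this
  have hcp1m : (c p1).val = 1 ∨ (c p1).val = 2 := by
    have : c p1 ∈ ⇑c '' {m : Pt k | m.val = 1 ∨ m.val = 2} :=
      ⟨p1, Or.inl hp1v, rfl⟩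
    rw [hc12] at this; exact this
  have hcq2m : (c q2).val = 4 * k + 1 ∨ (c q2).val = 4 * k + 2 := by
    have : c q2 ∈ ⇑c '' {m : Pt k | m.val = 4 * k + 1 ∨ m.val = 4 * k + 2} :=
      ⟨q2, Or.inr hq2v, rfl⟩
    rw [hc34] at this; exact this
  have hcq1m : (c q1).val = 4 * k + 1 ∨ (c q1).val = 4 * k + 2 := by
    have : c q1 ∈ ⇑c '' {m : Pt k | m.val = 4 * k + 1 ∨ m.val = 4 * k + 2} :=
      ⟨q1, Or.inl hq1v, rfl⟩
    rw [hc34] at this; exact this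
  -- parity forces same parity for c p2 and c q2
  rcases hcp2m with h2 | h2 <;> rcases hcq2m with h4 | h4
  · -- c p2 = p1, c q2 = q1 : double transposition
    have hcp2 : c p2 = p1 := Subtype.ext (by omega)
    have hcq2 : c q2 = q1 := Subtype.ext (by omega)
    have hcp1 : c p1 = p2 := by
      rcases hcp1m with h | h
      · exfalso
        have : c p1 = c p2 := Subtype.ext (by omega)
        exact np12 (c.injective this)
      · exact Subtype.ext (by omega)
    have hcq1 : c q1 = q2 := by
      rcases hcq1m with h | h
      · exfalso
        have : c q1 = c q2 := Subtype.ext (by omega)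
        exact nq12 (c.injective this)
      · exact Subtype.ext (by omega)
    have hceq : c = Equiv.swap p1 p2 * Equiv.swap q1 q2 := by
      apply Equiv.ext
      intro m
      have happ : (Equiv.swap p1 p2 * Equiv.swap q1 q2) m
          = Equiv.swap p1 p2 (Equiv.swap q1 q2 m) := rfl
      by_cases hm1 : m = p1
      · subst hm1
        rw [happ, Equiv.swap_apply_of_ne_of_ne np1q1 np1q2, Equiv.swap_apply_left]
        exact hcp1
      · by_cases hm2 : m = p2
        · subst hm2
          rw [happ, Equiv.swap_apply_of_ne_of_ne np2q1 np2q2, Equiv.swap_apply_right]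
          exact hcp2
        · by_cases hm3 : m = q1
          · subst hm3
            rw [happ, Equiv.swap_apply_left,
              Equiv.swap_apply_of_ne_of_ne (Ne.symm np1q2) (Ne.symm np2q2)]
            exact hcq1
          · by_cases hm4 : m = q2
            · subst hm4
              rw [happ, Equiv.swap_apply_right,
                Equiv.swap_apply_of_ne_of_ne (Ne.symm np1q1) (Ne.symm np2q1)]
              exact hcq2
            · rw [happ,
                Equiv.swap_apply_of_ne_of_ne hm3 hm4,
                Equiv.swap_apply_of_ne_of_ne hm1 hm2]
              apply hcfix
              intro hcon
              rcases hcon with h | h | h | h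
              · exact hm1 (Subtype.ext (by omega))
              · exact hm2 (Subtype.ext (by omega))
              · exact hm3 (Subtype.ext (by omega))
              · exact hm4 (Subtype.ext (by omega))
    rw [hceq, Equiv.Perm.sign_mul, Equiv.Perm.sign_swap np12,
      Equiv.Perm.sign_swap nq12]
    decide
  · exfalso; omega
  · exfalso; omega
  · -- c p2 = p2, c q2 = q2 : identity
    have hcp2 : c p2 = p2 := Subtype.ext (by omega)
    have hcq2 : c q2 = q2 := Subtype.ext (by omega)
    have hcp1 : c p1 = p1 := by
      rcases hcp1m with h | h
      · exact Subtype.ext (by omega)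
      · exfalso
        have : c p1 = c p2 := Subtype.ext (by omega)
        exact np12 (c.injective this)
    have hcq1 : c q1 = q1 := by
      rcases hcq1m with h | h
      · exact Subtype.ext (by omega)
      · exfalso
        have : c q1 = c q2 := Subtype.ext (by omega)
        exact nq12 (c.injective this)
    have hceq : c = 1 := by
      apply Equiv.ext
      intro m
      have hone : (1 : Equiv.Perm (Pt k)) m = m := rfl
      rw [hone]
      by_cases hm1 : m = p1
      · subst hm1; exact hcp1
      · by_cases hm2 : m = p2
        · subst hm2; exact hcp2
        · by_cases hm3 : m = q1
          · subst hm3; exact hcq1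
          · by_cases hm4 : m = q2
            · subst hm4; exact hcq2
            · apply hcfix
              intro hcon
              rcases hcon with h | h | h | h
              · exact hm1 (Subtype.ext (by omega))
              · exact hm2 (Subtype.ext (by omega))
              · exact hm3 (Subtype.ext (by omega))
              · exact hm4 (Subtype.ext (by omega))
    rw [hceq]
    simp
end

section
/- Let α be a finite set, F a permutation of α, and Q, C, R subgroups of the group Perm(α) of permutations of α. Assume that for all q ∈ Q, c ∈ C, r ∈ R with q F q⁻¹ = (c r) F (c r)⁻¹ one has sgn(c) = 1. Then the sum Σ sgn(c), taken over all triples (q, c, r) ∈ Q × C × R with (q c r) F (q c r)⁻¹ = F, is strictly positive. -/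
open scoped Classical

/-- Let `F` be a permutation of a finite set `α` and `Q, C, R` subgroups of `Perm α`.
If `sgn(c) = 1` whenever `q ∈ Q`, `c ∈ C`, `r ∈ R` satisfy `q·F = cr·F` (conjugation
action), then the sum of `sgn(c)` over all triples `(q, c, r) ∈ Q × C × R` with
`(qcr)·F = F` is strictly positive. -/
theorem coefficient_positive {α : Type*} [Fintype α] [DecidableEq α]
    (F : Equiv.Perm α) (Q C R : Subgroup (Equiv.Perm α))
    (h : ∀ q ∈ Q, ∀ c ∈ C, ∀ r ∈ R,
      q * F * q⁻¹ = (c * r) * F * (c * r)⁻¹ → Equiv.Perm.sign c = 1) :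
    0 < ∑ q : Q, ∑ c : C, ∑ r : R,
      if ((q : Equiv.Perm α) * c * r) * F * ((q : Equiv.Perm α) * c * r)⁻¹ = F
      then ((Equiv.Perm.sign (c : Equiv.Perm α) : ℤ)) else 0 := by
  have hterm : ∀ (q : Q) (c : C) (r : R),
      (0 : ℤ) ≤ if ((q : Equiv.Perm α) * c * r) * F * ((q : Equiv.Perm α) * c * r)⁻¹ = F
        then ((Equiv.Perm.sign (c : Equiv.Perm α) : ℤ)) else 0 := by
    intro q c r
    split_ifs with heq
    · have hq : ((q : Equiv.Perm α))⁻¹ ∈ Q := inv_mem q.2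
      have hkey : ((q : Equiv.Perm α))⁻¹ * F * ((q : Equiv.Perm α))⁻¹⁻¹
          = ((c : Equiv.Perm α) * r) * F * ((c : Equiv.Perm α) * r)⁻¹ := by
        have h2 : ((q : Equiv.Perm α))⁻¹ * (((q : Equiv.Perm α)) * c * r * F
            * (((q : Equiv.Perm α)) * c * r)⁻¹) * ((q : Equiv.Perm α))
            = ((q : Equiv.Perm α))⁻¹ * F * ((q : Equiv.Perm α)) := by rw [heq]
        rw [inv_inv, ← h2]
        group
      have := h _ hq _ c.2 _ r.2 hkey
      rw [this]; norm_num
    · exact le_rfl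
  refine Finset.sum_pos' (fun q _ => Finset.sum_nonneg fun c _ =>
    Finset.sum_nonneg fun r _ => hterm q c r) ⟨1, Finset.mem_univ _, ?_⟩
  refine Finset.sum_pos' (fun c _ => Finset.sum_nonneg fun r _ => hterm 1 c r)
    ⟨1, Finset.mem_univ _, ?_⟩
  refine Finset.sum_pos' (fun r _ => hterm 1 1 r) ⟨1, Finset.mem_univ _, ?_⟩
  simp
end
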